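/- Let q ∈ (0,1). If π is a *-automorphism of M₂(ℂ) satisfying Tr(ρ_q·π(x)) = Tr(ρ_q·x) for all x ∈ M₂(ℂ), then π(σ₃) = σ₃ and there exist a, b ∈ ℝ with a² + b² = 1 such that π(σ₁) = a·σ₁ + b·σ₂ and π(σ₂) = −b·σ₁ + a·σ₂. Conversely, for all a, b ∈ ℝ with a² + b² = 1 there exists a *-automorphism π of M₂(ℂ) with Tr(ρ_q·π(x)) = Tr(ρ_q·x) for all x, π(σ₃) = σ₃, π(σ₁) = a·σ₁ + b·σ₂ and π(σ₂) = −b·σ₁ + a·σ₂. -/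
import Mathlib


open Matrix

/-- The Pauli matrix `σ₁`. -/
def pauli1 : Matrix (Fin 2) (Fin 2) ℂ := !![0, 1; 1, 0]

/-- The Pauli matrix `σ₂`. -/
def pauli2 : Matrix (Fin 2) (Fin 2) ℂ := !![0, -Complex.I; Complex.I, 0]

/-- The Pauli matrix `σ₃`. -/
def pauli3 : Matrix (Fin 2) (Fin 2) ℂ := !![1, 0; 0, -1]

/-- The density matrix `ρ_q = (1+q²)·diag(q⁻², 1)`. -/
noncomputable def rhoq (q : ℝ) : Matrix (Fin 2) (Fin 2) ℂ :=
  (1 + (q : ℂ) ^ 2) • !![((q : ℂ) ^ 2)⁻¹, 0; 0, 1]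

/-- The automorphism group of the quantum set `(M₂, ψ_q)` for `q ∈ (0,1)` is `SO(2)`:
each ψ_q-preserving *-automorphism fixes `σ₃` and rotates `σ₁, σ₂`, and conversely each
such rotation is implemented by a ψ_q-preserving *-automorphism. -/

abbrev M2 := Matrix (Fin 2) (Fin 2) ℂ

lemma tr_sep (A B : M2) (h : ∀ w : M2, trace (w * A) = trace (w * B)) : A = B := by
  have h00 := h !![1,0;0,0]; have h01 := h !![0,0;1,0]
  have h10 := h !![0,1;0,0]; have h11 := h !![0,0;0,1]
  simp only [trace_fin_two, mul_apply, Fin.sum_univ_two] at h00 h01 h10 h11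
  simp at h00 h01 h10 h11
  ext i j; fin_cases i <;> fin_cases j <;> simp_all

lemma central (m : M2) (h : ∀ w : M2, m * w = w * m) : m = m 0 0 • 1 := by
  have h1 := h !![0,1;0,0]; have h2 := h !![0,0;1,0]
  have e1 := congrFun (congrFun h1 0 : _) 1
  have e3 := congrFun (congrFun h1 1 : _) 1
  have e4 := congrFun (congrFun h2 0 : _) 0
  simp [mul_apply, Fin.sum_univ_two] at e1 e3 e4
  conv_lhs => rw [eta_fin_two m]
  rw [e3, e4, ← e1, one_fin_two]
  ext i j; fin_cases i <;> fin_cases j <;> simp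

/-- conjugation by invertible matrix as algebra equivalence -/
noncomputable def conjEquiv (U V : M2) (hUV : U * V = 1) (hVU : V * U = 1) : M2 ≃ₐ[ℂ] M2 where
  toFun x := U * x * V
  invFun x := V * x * U
  left_inv x := by
    calc V * (U * x * V) * U = (V * U) * (x * (V * U)) := by simp only [mul_assoc]
    _ = x := by rw [hVU, mul_one, one_mul]
  right_inv x := by
    calc U * (V * x * U) * V = (U * V) * (x * (U * V)) := by simp only [mul_assoc]
    _ = x := by rw [hUV, mul_one, one_mul]
  map_mul' x y := by
    have : x * y = x * (V * U) * y := by rw [hVU, mul_one]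
    rw [this]; simp only [mul_assoc]
  map_add' x y := by noncomm_ring
  commutes' r := by
    simp only [Algebra.algebraMap_eq_smul_one]
    rw [mul_smul_comm, smul_mul_assoc, mul_one, hUV]



lemma converse (q : ℝ) (a b : ℝ) (hab : a ^ 2 + b ^ 2 = 1) :
    ∃ π : M2 ≃ₐ[ℂ] M2,
      (∀ x, π xᴴ = (π x)ᴴ) ∧
      (∀ x, trace (rhoq q * π x) = trace (rhoq q * x)) ∧
      π pauli3 = pauli3 ∧
      π pauli1 = (a : ℂ) • pauli1 + (b : ℂ) • pauli2 ∧
      π pauli2 = -(b : ℂ) • pauli1 + (a : ℂ) • pauli2 := by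
  set u : ℂ := a + b * Complex.I with hu
  have hns : Complex.normSq u = 1 := by
    simp [hu, Complex.normSq_apply]
    nlinarith [hab]
  have h1 : u * (starRingEnd ℂ) u = 1 := by
    rw [Complex.mul_conj, hns]; norm_num
  have h2 : (starRingEnd ℂ) u * u = 1 := by rw [mul_comm] at h1; exact h1
  set U : M2 := !![1, 0; 0, u] with hU
  set V : M2 := !![1, 0; 0, star u] with hV
  have hUV : U * V = 1 := by
    ext i j; fin_cases i <;> fin_cases j <;>
      simp [hU, hV, mul_apply, Fin.sum_univ_two, one_apply, h1]
  have hVU : V * U = 1 := by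
    ext i j; fin_cases i <;> fin_cases j <;>
      simp [hU, hV, mul_apply, Fin.sum_univ_two, one_apply, h2]
  refine ⟨conjEquiv U V hUV hVU, ?_, ?_, ?_, ?_, ?_⟩
  · intro x
    show U * xᴴ * V = (U * x * V)ᴴ
    have hUH : Uᴴ = V := by
      ext i j; fin_cases i <;> fin_cases j <;> simp [hU, hV, conjTranspose_apply]
    have hVH : Vᴴ = U := by
      ext i j; fin_cases i <;> fin_cases j <;> simp [hU, hV, conjTranspose_apply]
    rw [conjTranspose_mul, conjTranspose_mul, hUH, hVH, mul_assoc]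
  · intro x
    show trace (rhoq q * (U * x * V)) = trace (rhoq q * x)
    have hcom : V * rhoq q * U = rhoq q := by
      rw [rhoq, mul_smul_comm, smul_mul_assoc]
      congr 1
      ext i j; fin_cases i <;> fin_cases j <;>
        simp [hU, hV, mul_apply, Fin.sum_univ_two, h2]
    calc trace (rhoq q * (U * x * V)) = trace ((rhoq q * U * x) * V) := by
          simp only [mul_assoc]
    _ = trace (V * (rhoq q * U * x)) := trace_mul_comm _ _
    _ = trace ((V * rhoq q * U) * x) := by simp only [mul_assoc]
    _ = trace (rhoq q * x) := by rw [hcom]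
  · show U * pauli3 * V = pauli3
    ext i j; fin_cases i <;> fin_cases j <;>
      simp [hU, hV, pauli3, mul_apply, Fin.sum_univ_two, h1]
  · show U * pauli1 * V = _
    ext i j; fin_cases i <;> fin_cases j <;>
      simp [hU, hV, hu, pauli1, pauli2, mul_apply, Fin.sum_univ_two, Complex.ext_iff] <;> norm_num
  · show U * pauli2 * V = _
    ext i j; fin_cases i <;> fin_cases j <;>
      simp [hU, hV, hu, pauli1, pauli2, mul_apply, Fin.sum_univ_two, Complex.ext_iff] <;> norm_num



lemma forward (q : ℝ) (hq : q ∈ Set.Ioo (0 : ℝ) 1)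
    (π : M2 ≃ₐ[ℂ] M2) (hstar : ∀ x, π xᴴ = (π x)ᴴ)
    (hψ : ∀ x, trace (rhoq q * π x) = trace (rhoq q * x)) :
    π pauli3 = pauli3 ∧
    ∃ a b : ℝ, a ^ 2 + b ^ 2 = 1 ∧
      π pauli1 = (a : ℂ) • pauli1 + (b : ℂ) • pauli2 ∧
      π pauli2 = -(b : ℂ) • pauli1 + (a : ℂ) • pauli2 := by
  obtain ⟨hq0, hq1⟩ := hq
  have hqc : (q : ℂ) ≠ 0 := Complex.ofReal_ne_zero.mpr hq0.ne'
  set u : ℂ := ((q : ℂ) ^ 2)⁻¹ with hu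
  have hu1 : u - 1 ≠ 0 := by
    simp only [hu, sub_ne_zero]
    intro h
    have h2 : (q : ℂ) ^ 2 = 1 := by
      field_simp at h
      exact h.symm
    have : (q : ℝ) ^ 2 = 1 := by exact_mod_cast h2
    nlinarith
  set dm : M2 := !![u, 0; 0, 1] with hdm
  set di : M2 := !![(q : ℂ) ^ 2, 0; 0, 1] with hdi
  have hdd : dm * di = 1 := by
    ext i j; fin_cases i <;> fin_cases j <;>
      simp [hdm, hdi, hu, mul_apply, Fin.sum_univ_two, one_apply, inv_mul_cancel₀ (pow_ne_zero 2 hqc)]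
  have hdid : di * dm = 1 := by
    ext i j; fin_cases i <;> fin_cases j <;>
      simp [hdm, hdi, hu, mul_apply, Fin.sum_univ_two, one_apply, mul_inv_cancel₀ (pow_ne_zero 2 hqc)]
  have hs : (1 + (q : ℂ) ^ 2) ≠ 0 := by
    have : ((1 + q ^ 2 : ℝ) : ℂ) ≠ 0 := by
      exact_mod_cast (by positivity : (1 + q ^ 2 : ℝ) ≠ 0)
    simpa using this
  have hψ' : ∀ x, trace (dm * π x) = trace (dm * x) := by
    intro x
    have h := hψ x
    rw [rhoq] at h
    simp only [smul_mul_assoc, trace_smul] at h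
    exact smul_right_injective ℂ hs h
  -- the key commutation identity
  have key : ∀ y, π y * dm = dm * π (di * y * dm) := by
    intro y
    apply tr_sep
    intro w
    have hw : π (π.symm w) = w := π.apply_symm_apply w
    set x := π.symm w with hx
    calc trace (w * (π y * dm))
        = trace (w * π y * dm) := by rw [mul_assoc]
      _ = trace (dm * w * π y) := by rw [trace_mul_cycle]
      _ = trace (dm * (w * π y)) := by rw [mul_assoc]
      _ = trace (dm * (π x * π y)) := by rw [hw]
      _ = trace (dm * π (x * y)) := by rw [_root_.map_mul]
      _ = trace (dm * (x * y)) := hψ' _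
      _ = trace (dm * x * y) := by rw [mul_assoc]
      _ = trace (y * dm * x) := by rw [trace_mul_cycle]
      _ = trace (dm * di * (y * dm * x)) := by rw [hdd, one_mul]
      _ = trace (dm * (di * y * dm * x)) := by simp only [mul_assoc]
      _ = trace (dm * π (di * y * dm * x)) := (hψ' _).symm
      _ = trace (dm * (π (di * y * dm) * π x)) := by rw [_root_.map_mul]
      _ = trace (dm * (π (di * y * dm) * w)) := by rw [hw]
      _ = trace (dm * π (di * y * dm) * w) := by rw [← mul_assoc]
      _ = trace (w * (dm * π (di * y * dm))) := by rw [trace_mul_comm]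
  have hc : π dm * π di = 1 := by rw [← _root_.map_mul, hdd, _root_.map_one]
  have hic : π di * π dm = 1 := by rw [← _root_.map_mul, hdid, _root_.map_one]
  have hm : ∀ y, π y * (dm * π di) = (dm * π di) * π y := by
    intro y
    have k := key y
    calc π y * (dm * π di) = (π y * dm) * π di := by rw [mul_assoc]
      _ = dm * (π di * π y * π dm) * π di := by
          rw [k, _root_.map_mul, _root_.map_mul]
      _ = (dm * π di) * π y * (π dm * π di) := by simp only [mul_assoc]
      _ = (dm * π di) * π y := by rw [hc, mul_one]
  have hall : ∀ w : M2, (dm * π di) * w = w * (dm * π di) := by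
    intro w
    have h := hm (π.symm w)
    rw [π.apply_symm_apply] at h
    exact h.symm
  have hcen := central _ hall
  set lam : ℂ := (dm * π di) 0 0 with hlam
  have hd_lam : dm = lam • π dm := by
    calc dm = dm * (π di * π dm) := by rw [hic, mul_one]
      _ = (dm * π di) * π dm := by rw [mul_assoc]
      _ = (lam • 1) * π dm := by rw [← hcen]
      _ = lam • π dm := by rw [smul_mul_assoc, one_mul]
  have hlam0 : lam ≠ 0 := by
    intro h0
    have e := congrFun (congrFun hd_lam 1) 1
    rw [h0] at e
    simp [hdm] at e
  have hpidm : π dm = lam⁻¹ • dm := by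
    conv_rhs => rw [hd_lam]
    simp [smul_smul, inv_mul_cancel₀ hlam0]
  have hT0 : trace (dm * dm) ≠ 0 := by
    have hT : trace (dm * dm) = (((q ^ 2)⁻¹ * (q ^ 2)⁻¹ + 1 : ℝ) : ℂ) := by
      simp [hdm, hu, trace_fin_two, mul_apply, Fin.sum_univ_two]
      all_goals (push_cast; ring)
    rw [hT]
    exact_mod_cast (by positivity : ((q ^ 2)⁻¹ * (q ^ 2)⁻¹ + 1 : ℝ) ≠ 0)
  have hlam1 : lam = 1 := by
    have h := hψ' dm
    rw [hpidm, mul_smul_comm, trace_smul, smul_eq_mul] at h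
    have h1 : lam⁻¹ = 1 := mul_right_cancel₀ hT0 (h.trans (one_mul _).symm)
    rwa [inv_eq_one] at h1
  have hfix : π dm = dm := by rw [hpidm, hlam1]; simp
  -- π fixes e11
  set e11 : M2 := !![(1:ℂ),0;0,0] with he
  have hsub : dm - 1 = (u - 1) • e11 := by
    ext i j; fin_cases i <;> fin_cases j <;> simp [hdm, he, one_apply]
  have he11 : π e11 = e11 := by
    have h1 : π (dm - 1) = dm - 1 := by rw [map_sub, _root_.map_one, hfix]
    rw [hsub, _root_.map_smul] at h1
    exact smul_right_injective M2 hu1 h1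
  -- analyze π e12
  set e12 : M2 := !![(0:ℂ),1;0,0] with he12
  set e21 : M2 := !![(0:ℂ),0;1,0] with he21
  have h12 : e11 * e12 = e12 := by
    ext i j; fin_cases i <;> fin_cases j <;> simp [he, he12, mul_apply, Fin.sum_univ_two]
  have h21 : e12 * e11 = 0 := by
    ext i j; fin_cases i <;> fin_cases j <;> simp [he, he12, mul_apply, Fin.sum_univ_two]
  have hee : e12 * e21 = e11 := by
    ext i j; fin_cases i <;> fin_cases j <;> simp [he, he12, he21, mul_apply, Fin.sum_univ_two]
  have hTt : e12ᴴ = e21 := by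
    ext i j; fin_cases i <;> fin_cases j <;> simp [he12, he21, conjTranspose_apply]
  have hF1 : e11 * π e12 = π e12 := by rw [← he11, ← _root_.map_mul, h12]
  have hF2 : π e12 * e11 = 0 := by rw [← he11, ← _root_.map_mul, h21, map_zero]
  have a00 := congrFun (congrFun hF2 0) 0
  have a10 := congrFun (congrFun hF1 1) 0
  have a11 := congrFun (congrFun hF1 1) 1
  simp [he, mul_apply, Fin.sum_univ_two] at a00 a10 a11
  set w : ℂ := π e12 0 1 with hwdef
  have hFeq : π e12 = !![0, w; 0, 0] := by
    conv_lhs => rw [eta_fin_two (π e12)]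
    rw [a00, ← a10, ← a11]
  have hpi21 : π e21 = (π e12)ᴴ := by rw [← hTt, hstar]
  have hFF : π e12 * (π e12)ᴴ = e11 := by rw [← hpi21, ← _root_.map_mul, hee, he11]
  have hww : w * (starRingEnd ℂ) w = 1 := by
    have e := congrFun (congrFun hFF 0) 0
    rw [hFeq] at e
    simpa [he, mul_apply, Fin.sum_univ_two, conjTranspose_apply] using e
  have hn : w.re ^ 2 + (-w.im) ^ 2 = 1 := by
    have h1 : (Complex.normSq w : ℂ) = 1 := by rw [← Complex.mul_conj]; exact hww
    have h2 : Complex.normSq w = 1 := by exact_mod_cast h1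
    rw [Complex.normSq_apply] at h2
    nlinarith [h2]
  refine ⟨?_, w.re, -w.im, hn, ?_, ?_⟩
  · have hp3 : pauli3 = (2:ℂ) • e11 - 1 := by
      ext i j; fin_cases i <;> fin_cases j <;> simp [pauli3, he, one_apply] <;> norm_num
    rw [hp3, map_sub, _root_.map_smul, _root_.map_one, he11]
  · have hp1 : pauli1 = e12 + e21 := by
      ext i j; fin_cases i <;> fin_cases j <;> simp [pauli1, he12, he21]
    conv_lhs => rw [hp1, map_add, hpi21, hFeq]
    ext i j; fin_cases i <;> fin_cases j <;>
      simp [pauli1, pauli2, conjTranspose_apply, Complex.ext_iff]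
  · have hp2 : pauli2 = (-Complex.I) • e12 + Complex.I • e21 := by
      ext i j; fin_cases i <;> fin_cases j <;> simp [pauli2, he12, he21]
    conv_lhs => rw [hp2, map_add, _root_.map_smul, _root_.map_smul, hpi21, hFeq]
    ext i j; fin_cases i <;> fin_cases j <;>
      simp [pauli1, pauli2, conjTranspose_apply, Complex.ext_iff] <;> ring

theorem stmt14 (q : ℝ) (hq : q ∈ Set.Ioo (0 : ℝ) 1) :
    (∀ π : Matrix (Fin 2) (Fin 2) ℂ ≃ₐ[ℂ] Matrix (Fin 2) (Fin 2) ℂ,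
      (∀ x, π xᴴ = (π x)ᴴ) →
      (∀ x, Matrix.trace (rhoq q * π x) = Matrix.trace (rhoq q * x)) →
      π pauli3 = pauli3 ∧
      ∃ a b : ℝ, a ^ 2 + b ^ 2 = 1 ∧
        π pauli1 = (a : ℂ) • pauli1 + (b : ℂ) • pauli2 ∧
        π pauli2 = -(b : ℂ) • pauli1 + (a : ℂ) • pauli2) ∧
    (∀ a b : ℝ, a ^ 2 + b ^ 2 = 1 →
      ∃ π : Matrix (Fin 2) (Fin 2) ℂ ≃ₐ[ℂ] Matrix (Fin 2) (Fin 2) ℂ,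
        (∀ x, π xᴴ = (π x)ᴴ) ∧
        (∀ x, Matrix.trace (rhoq q * π x) = Matrix.trace (rhoq q * x)) ∧
        π pauli3 = pauli3 ∧
        π pauli1 = (a : ℂ) • pauli1 + (b : ℂ) • pauli2 ∧
        π pauli2 = -(b : ℂ) • pauli1 + (a : ℂ) • pauli2) := by
  constructor
  · intro π h1 h2
    exact forward q hq π h1 h2
  · intro a b hab
    exact converse q a b hab
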